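/- Suppose a set S ∈ 𝕄 satisfies the δ-DMO guarantee ‖z_S‖₂ ≥ δ · max_{S' ∈ 𝕄} ‖z_{S'}‖₂ with δ ∈ (0,1], and let v = -C · z_S / ‖z_S‖₂ (assuming z_S ≠ 0). Then v satisfies the approximate IPO guarantee ⟨z, v⟩ ≤ δ · min_{s ∈ D} ⟨z, s⟩, where D = conv{x : ‖x‖₂ ≤ C, supp(x) ∈ 𝕄}. -/

import Mathlib

open scoped InnerProductSpace

noncomputable def restrict {d : ℕ} (z : EuclideanSpace ℝ (Fin d)) (S : Finset (Fin d)) :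
    EuclideanSpace ℝ (Fin d) :=
  WithLp.toLp 2 (fun i => if i ∈ S then z i else 0)

lemma inner_restrict_self {d : ℕ} (z : EuclideanSpace ℝ (Fin d)) (S : Finset (Fin d)) :
    ⟪z, restrict z S⟫_ℝ = ‖restrict z S‖ ^ 2 := by
  rw [← real_inner_self_eq_norm_sq]
  simp only [PiLp.inner_apply, RCLike.inner_apply, conj_trivial, restrict]
  apply Finset.sum_congr rfl
  intro i _
  by_cases h : i ∈ S <;> simp [h]

lemma inner_restrict_eq {d : ℕ} (z x : EuclideanSpace ℝ (Fin d)) (S : Finset (Fin d))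
    (hx : ∀ i, x i ≠ 0 → i ∈ S) :
    ⟪z, x⟫_ℝ = ⟪restrict z S, x⟫_ℝ := by
  simp only [PiLp.inner_apply, RCLike.inner_apply, conj_trivial, restrict]
  apply Finset.sum_congr rfl
  intro i _
  by_cases h : i ∈ S
  · simp [h]
  · have : x i = 0 := by
      by_contra hxi
      exact h (hx i hxi)
    simp [h, this]

/-- If `S ∈ 𝕄` satisfies the δ-DMO guarantee `‖z_S‖ ≥ δ · max_{S' ∈ 𝕄} ‖z_{S'}‖` with
`δ ∈ (0,1]`, then `v = -C • z_S / ‖z_S‖` satisfies the approximate IPO guarantee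
`⟨z, v⟩ ≤ δ · min_{s ∈ D} ⟨z, s⟩` where `D = conv{x : ‖x‖ ≤ C, supp x ∈ 𝕄}`. -/
theorem stmt2 {d : ℕ} (𝕄 : Finset (Finset (Fin d))) (h𝕄 : 𝕄.Nonempty)
    (hcover : ∀ i : Fin d, ∃ S ∈ 𝕄, i ∈ S)
    (C : ℝ) (hC : 0 < C) (z : EuclideanSpace ℝ (Fin d))
    (δ : ℝ) (hδ0 : 0 < δ) (hδ1 : δ ≤ 1)
    (S : Finset (Fin d)) (hS : S ∈ 𝕄)
    (hdmo : ∀ S' ∈ 𝕄, δ * ‖restrict z S'‖ ≤ ‖restrict z S‖)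
    (hzS : restrict z S ≠ 0) :
    ∀ s ∈ convexHull ℝ {x : EuclideanSpace ℝ (Fin d) |
        ‖x‖ ≤ C ∧ ∃ S' ∈ 𝕄, ∀ i, x i ≠ 0 → i ∈ S'},
      ⟪z, ((-(C / ‖restrict z S‖)) • restrict z S : EuclideanSpace ℝ (Fin d))⟫_ℝ
        ≤ δ * ⟪z, s⟫_ℝ := by
  have hnS : (0:ℝ) < ‖restrict z S‖ := norm_pos_iff.mpr hzS
  have hLHS : ⟪z, ((-(C / ‖restrict z S‖)) • restrict z S : EuclideanSpace ℝ (Fin d))⟫_ℝ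
      = -(C * ‖restrict z S‖) := by
    rw [real_inner_smul_right, inner_restrict_self]
    field_simp
  rw [hLHS]
  intro s hs
  have hconv : Convex ℝ {x : EuclideanSpace ℝ (Fin d) |
      -(C * ‖restrict z S‖) ≤ δ * ⟪z, x⟫_ℝ} := by
    intro x hx y hy a b ha hb hab
    simp only [Set.mem_setOf_eq] at *
    rw [inner_add_right, real_inner_smul_right, real_inner_smul_right]
    calc -(C * ‖restrict z S‖) = a * (-(C * ‖restrict z S‖)) + b * (-(C * ‖restrict z S‖)) := by
          rw [← add_mul, hab, one_mul]
      _ ≤ a * (δ * ⟪z, x⟫_ℝ) + b * (δ * ⟪z, y⟫_ℝ) := by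
          gcongr
      _ = δ * (a * ⟪z, x⟫_ℝ + b * ⟪z, y⟫_ℝ) := by ring
  have hsub : {x : EuclideanSpace ℝ (Fin d) |
      ‖x‖ ≤ C ∧ ∃ S' ∈ 𝕄, ∀ i, x i ≠ 0 → i ∈ S'} ⊆
      {x : EuclideanSpace ℝ (Fin d) | -(C * ‖restrict z S‖) ≤ δ * ⟪z, x⟫_ℝ} := by
    rintro x ⟨hxC, S', hS', hsupp⟩
    simp only [Set.mem_setOf_eq]
    rw [inner_restrict_eq z x S' hsupp]
    have h1 : -(‖restrict z S'‖ * ‖x‖) ≤ ⟪restrict z S', x⟫_ℝ := by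
      have := real_inner_le_norm (-(restrict z S')) x
      rw [inner_neg_left, norm_neg] at this
      linarith
    have h2 : δ * ‖restrict z S'‖ * ‖x‖ ≤ ‖restrict z S‖ * C := by
      have := hdmo S' hS'
      have hn : (0:ℝ) ≤ ‖x‖ := norm_nonneg x
      have hn2 : (0:ℝ) ≤ δ * ‖restrict z S'‖ := by positivity
      calc δ * ‖restrict z S'‖ * ‖x‖ ≤ ‖restrict z S‖ * ‖x‖ := by gcongr
        _ ≤ ‖restrict z S‖ * C := by gcongr
    nlinarith
  have := convexHull_min hsub hconv hs
  exact this
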